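/- Let L_1, L_2, L_3 be convex subsets of the graph group G_F with L_i ∩ L_j ≠ ∅ for all i, j ∈ {1,2,3}. Then L_1 ∩ L_2 ∩ L_3 ≠ ∅. -/

import Mathlib

open Pointwise

namespace GraphGroupPaper

/-- The set of commutator relators: `gᵢ` and `gⱼ` commute for every pair of distinct
`i, j` with `{i,j} ∉ F`. -/
def Rels (k : ℕ) (F : Set (Sym2 (Fin k))) : Set (FreeGroup (Fin k)) :=
  {w | ∃ i j : Fin k, i ≠ j ∧ s(i, j) ∉ F ∧
      w = FreeGroup.of i * FreeGroup.of j * (FreeGroup.of i)⁻¹ * (FreeGroup.of j)⁻¹}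

/-- The graph group `G_F` with generators `g₁, …, g_k` and relations `gᵢgⱼ = gⱼgᵢ`
for all distinct `i, j` with `{i,j} ∉ F`. -/
abbrev Grp (k : ℕ) (F : Set (Sym2 (Fin k))) := PresentedGroup (Rels k F)

/-- The generator `gᵢ` of the graph group. -/
def gen (k : ℕ) (F : Set (Sym2 (Fin k))) (i : Fin k) : Grp k F :=
  PresentedGroup.of i

/-- The group element corresponding to a symbol: `(i, true)` stands for `gᵢ`,
`(i, false)` stands for `gᵢ⁻¹`. -/
def sym (k : ℕ) (F : Set (Sym2 (Fin k))) (α : Fin k × Bool) : Grp k F :=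
  if α.2 then gen k F α.1 else (gen k F α.1)⁻¹

/-- The product of the word `l` of symbols, as an element of the graph group. -/
def wordProd (k : ℕ) (F : Set (Sym2 (Fin k))) (l : List (Fin k × Bool)) : Grp k F :=
  (l.map (sym k F)).prod

/-- `|x|` : the length of a shortest word in the symbols representing `x`. -/
noncomputable def len {k : ℕ} {F : Set (Sym2 (Fin k))} (x : Grp k F) : ℕ :=
  sInf {n | ∃ l : List (Fin k × Bool), wordProd k F l = x ∧ l.length = n}

/-- The partial order on `G_F`:  `x ≤ y` iff `|y| = |x| + |x⁻¹y|`. -/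
def le {k : ℕ} {F : Set (Sym2 (Fin k))} (x y : Grp k F) : Prop :=
  len y = len x + len (x⁻¹ * y)

/-- `m` is the meet `x ∧ y` (greatest lower bound w.r.t. `le`). -/
def IsMeet {k : ℕ} {F : Set (Sym2 (Fin k))} (x y m : Grp k F) : Prop :=
  le m x ∧ le m y ∧ ∀ w, le w x → le w y → le w m

/-- `j` is the (finite) join `x ∨ y` (least upper bound w.r.t. `le`);
`x ∨ y` is finite iff such a `j` exists. -/
def IsJoin {k : ℕ} {F : Set (Sym2 (Fin k))} (x y j : Grp k F) : Prop :=
  le x j ∧ le y j ∧ ∀ w, le x w → le y w → le j w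

/-- `j` is the (finite) join of the set `S`. -/
def IsJoinSet {k : ℕ} {F : Set (Sym2 (Fin k))} (S : Set (Grp k F)) (j : Grp k F) : Prop :=
  (∀ s ∈ S, le s j) ∧ ∀ w, (∀ s ∈ S, le s w) → le j w

/-- `y` is a segment of `a` if `a = x·y·z` for some `x, z`. -/
def Segment {k : ℕ} {F : Set (Sym2 (Fin k))} (y a : Grp k F) : Prop :=
  ∃ x z, a = x * y * z ∧ len a = len x + len y + len z

/-- The left-invariant metric `dist(x,y) = |x⁻¹y|`. -/
noncomputable def dist {k : ℕ} {F : Set (Sym2 (Fin k))} (x y : Grp k F) : ℕ :=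
  len (x⁻¹ * y)

/-- A nonempty set `L` is convex if `x, z ∈ L` and `dist(x,y) + dist(y,z) = dist(x,z)`
imply `y ∈ L`. -/
def ConvexSet {k : ℕ} {F : Set (Sym2 (Fin k))} (L : Set (Grp k F)) : Prop :=
  L.Nonempty ∧ ∀ x z y : Grp k F, x ∈ L → z ∈ L →
    dist x y + dist y z = dist x z → y ∈ L

/-- An ideal: nonempty, downward closed, and closed under finite joins. -/
def IdealSet {k : ℕ} {F : Set (Sym2 (Fin k))} (I : Set (Grp k F)) : Prop :=
  I.Nonempty ∧ (∀ x ∈ I, ∀ y, le y x → y ∈ I) ∧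
    (∀ x ∈ I, ∀ y ∈ I, ∀ j, IsJoin x y j → j ∈ I)

/-- `H` is closed if both `H` and `H⁻¹` are ideals. -/
def ClosedSet {k : ℕ} {F : Set (Sym2 (Fin k))} (H : Set (Grp k F)) : Prop :=
  IdealSet H ∧ IdealSet H⁻¹

/-- `m` is a minimal element of `S` w.r.t. `le`. -/
def MinimalIn {k : ℕ} {F : Set (Sym2 (Fin k))} (S : Set (Grp k F)) (m : Grp k F) : Prop :=
  m ∈ S ∧ ∀ x ∈ S, le x m → x = m

/-- `l` is a reduced (i.e. shortest) word representing `x`. -/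
def MinWord {k : ℕ} {F : Set (Sym2 (Fin k))} (x : Grp k F) (l : List (Fin k × Bool)) : Prop :=
  wordProd k F l = x ∧ l.length = len x

open Classical in
/-- `#_α(x)`: the number of occurrences of the symbol `α` (not counting `α⁻¹`)
in a reduced word representing `x`. -/
noncomputable def symCount {k : ℕ} {F : Set (Sym2 (Fin k))} (α : Fin k × Bool)
    (x : Grp k F) : ℕ :=
  if h : ∃ l, MinWord x l then h.choose.count α else 0

/-- The symbol `α` occurs in `x`. -/
def Occurs {k : ℕ} {F : Set (Sym2 (Fin k))} (α : Fin k × Bool) (x : Grp k F) : Prop :=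
  0 < symCount α x

/-- `α` is a maximal symbol of `x`, i.e. `xα⁻¹ ≤ x`. -/
def MaxSym {k : ℕ} {F : Set (Sym2 (Fin k))} (α : Fin k × Bool) (x : Grp k F) : Prop :=
  le (x * (sym k F α)⁻¹) x

/-- A peak: an element with precisely one maximal symbol. -/
def IsPeak {k : ℕ} {F : Set (Sym2 (Fin k))} (p : Grp k F) : Prop :=
  ∃! α : Fin k × Bool, MaxSym α p

/-- An `α`-peak: a peak whose unique maximal symbol is `α`. -/
def AlphaPeak {k : ℕ} {F : Set (Sym2 (Fin k))} (α : Fin k × Bool) (p : Grp k F) : Prop :=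
  MaxSym α p ∧ ∀ β, MaxSym β p → β = α

/-- The set of generator indices occurring in `b`. -/
def Support {k : ℕ} {F : Set (Sym2 (Fin k))} (b : Grp k F) : Set (Fin k) :=
  {i | Occurs (i, true) b ∨ Occurs (i, false) b}

/-- `b` is connected: the generators occurring in `b` induce a connected subgraph of
the graph `([k], F)`. -/
def Conn {k : ℕ} {F : Set (Sym2 (Fin k))} (b : Grp k F) : Prop :=
  (SimpleGraph.induce (Support b) (SimpleGraph.fromEdgeSet F)).Connected

/-- `b` is cyclically reduced: `b ∧ b⁻¹ = 1`. -/
def CycRed {k : ℕ} {F : Set (Sym2 (Fin k))} (b : Grp k F) : Prop :=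
  IsMeet b b⁻¹ 1

section Helly

variable {k : ℕ} {F : Set (Sym2 (Fin k))}

/-- Inverse of a symbol. -/
def sinv (α : Fin k × Bool) : Fin k × Bool := (α.1, !α.2)

@[simp] lemma sinv_sinv (α : Fin k × Bool) : sinv (sinv α) = α := by simp [sinv]

@[simp] lemma sinv_fst (α : Fin k × Bool) : (sinv α).1 = α.1 := rfl

lemma sinv_ne_iff_fst {α β : Fin k × Bool} (h : α.1 ≠ β.1) : β ≠ sinv α := by
  intro hb; apply h; rw [hb]; rfl

/-- The commutation relation on symbols. -/
def CC (F : Set (Sym2 (Fin k))) (α β : Fin k × Bool) : Prop :=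
  α.1 ≠ β.1 ∧ s(α.1, β.1) ∉ F

lemma CC.symm {α β : Fin k × Bool} (h : CC F α β) : CC F β α :=
  ⟨h.1.symm, by rw [Sym2.eq_swap]; exact h.2⟩

@[simp] lemma CC_sinv_left {α β : Fin k × Bool} : CC F (sinv α) β ↔ CC F α β := Iff.rfl

@[simp] lemma CC_sinv_right {α β : Fin k × Bool} : CC F α (sinv β) ↔ CC F α β := Iff.rfl

lemma CC.ne_sinv {α β : Fin k × Bool} (h : CC F α β) : β ≠ sinv α := sinv_ne_iff_fst h.1

lemma CC.irrefl (α : Fin k × Bool) : ¬ CC F α α := fun h => h.1 rfl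

@[simp] lemma sym_sinv (α : Fin k × Bool) : sym k F (sinv α) = (sym k F α)⁻¹ := by
  obtain ⟨i, b⟩ := α; cases b <;> simp [sym, sinv]

lemma gen_comm {i j : Fin k} (hij : i ≠ j) (hF : s(i, j) ∉ F) :
    Commute (gen k F i) (gen k F j) := by
  have hr : (FreeGroup.of i * FreeGroup.of j * (FreeGroup.of i)⁻¹ * (FreeGroup.of j)⁻¹ :
      FreeGroup (Fin k)) ∈ Rels k F := ⟨i, j, hij, hF, rfl⟩
  have h1 : PresentedGroup.mk (Rels k F)
      (FreeGroup.of i * FreeGroup.of j * (FreeGroup.of i)⁻¹ * (FreeGroup.of j)⁻¹) = 1 := by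
    apply (QuotientGroup.eq_one_iff _).2
    exact Subgroup.subset_normalClosure hr
  have h2 : gen k F i * gen k F j * (gen k F i)⁻¹ * (gen k F j)⁻¹ = 1 := by
    simpa [gen, PresentedGroup.of, map_mul, map_inv] using h1
  have := mul_eq_one_iff_eq_inv.mp h2
  unfold Commute SemiconjBy
  rw [show gen k F i * gen k F j = (gen k F i * gen k F j * (gen k F i)⁻¹) * gen k F i by group]
  rw [this]; group

lemma sym_comm {α β : Fin k × Bool} (h : CC F α β) :
    Commute (sym k F α) (sym k F β) := by
  have base : Commute (gen k F α.1) (gen k F β.1) := gen_comm h.1 h.2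
  obtain ⟨i, b⟩ := α; obtain ⟨j, b'⟩ := β
  cases b <;> cases b' <;> simp [sym] <;>
    first
      | exact base
      | exact base.inv_left
      | exact base.inv_right
      | exact base.inv_left.inv_right

/-- One braid move: swapping two adjacent commuting symbols. -/
def Swap (F : Set (Sym2 (Fin k))) : List (Fin k × Bool) → List (Fin k × Bool) → Prop :=
  fun l l' => ∃ u v α β, CC F α β ∧ l = u ++ α :: β :: v ∧ l' = u ++ β :: α :: v

/-- Braid equivalence: reflexive-transitive closure of swaps. -/
def Braid (F : Set (Sym2 (Fin k))) : List (Fin k × Bool) → List (Fin k × Bool) → Prop :=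
  Relation.ReflTransGen (Swap F)

lemma Swap.symm' {l l' : List (Fin k × Bool)} (h : Swap F l l') : Swap F l' l := by
  obtain ⟨u, v, α, β, hc, h1, h2⟩ := h
  exact ⟨u, v, β, α, hc.symm, h2, h1⟩

@[refl] lemma Braid.refl (l : List (Fin k × Bool)) : Braid F l l := Relation.ReflTransGen.refl

lemma Braid.trans {a b c : List (Fin k × Bool)} (h1 : Braid F a b) (h2 : Braid F b c) :
    Braid F a c := Relation.ReflTransGen.trans h1 h2

lemma Braid.symm {a b : List (Fin k × Bool)} (h : Braid F a b) : Braid F b a :=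
  @Std.Symm.symm _ _ (@Relation.ReflTransGen.stdSymm _ _ ⟨fun _ _ => Swap.symm'⟩) _ _ h

lemma Braid.single {u v : List (Fin k × Bool)} {α β : Fin k × Bool} (hc : CC F α β) :
    Braid F (u ++ α :: β :: v) (u ++ β :: α :: v) :=
  Relation.ReflTransGen.single ⟨u, v, α, β, hc, rfl, rfl⟩

lemma Braid.swap₀ {v : List (Fin k × Bool)} {α β : Fin k × Bool} (hc : CC F α β) :
    Braid F (α :: β :: v) (β :: α :: v) := Braid.single (u := []) hc

lemma Braid.cons {t t' : List (Fin k × Bool)} (γ : Fin k × Bool) (h : Braid F t t') :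
    Braid F (γ :: t) (γ :: t') := by
  refine Relation.ReflTransGen.lift (γ :: ·) ?_ _ _ h
  rintro a b ⟨u, v, α, β, hc, h1, h2⟩
  exact ⟨γ :: u, v, α, β, hc, by simp [h1], by simp [h2]⟩

lemma Braid.append_left (u : List (Fin k × Bool)) {t t' : List (Fin k × Bool)}
    (h : Braid F t t') : Braid F (u ++ t) (u ++ t') := by
  induction u with
  | nil => simpa using h
  | cons γ u ih => exact Braid.cons γ ih

lemma Braid.append_right {t t' : List (Fin k × Bool)} (v : List (Fin k × Bool))
    (h : Braid F t t') : Braid F (t ++ v) (t' ++ v) := by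
  refine Relation.ReflTransGen.lift (· ++ v) ?_ _ _ h
  rintro a b ⟨u, w, α, β, hc, h1, h2⟩
  exact ⟨u, w ++ v, α, β, hc, by simp [h1], by simp [h2]⟩

lemma Braid.length {a b : List (Fin k × Bool)} (h : Braid F a b) : a.length = b.length := by
  induction h with
  | refl => rfl
  | tail _ hs ih => obtain ⟨u, v, α, β, _, h1, h2⟩ := hs; rw [ih, h1, h2]; simp

@[simp] lemma wordProd_nil : wordProd k F [] = 1 := rfl

@[simp] lemma wordProd_cons (α : Fin k × Bool) (l : List (Fin k × Bool)) :
    wordProd k F (α :: l) = sym k F α * wordProd k F l := by simp [wordProd]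

lemma wordProd_append (a b : List (Fin k × Bool)) :
    wordProd k F (a ++ b) = wordProd k F a * wordProd k F b := by simp [wordProd]

lemma Braid.wordProd {a b : List (Fin k × Bool)} (h : Braid F a b) :
    wordProd k F a = wordProd k F b := by
  induction h with
  | refl => rfl
  | tail _ hs ih =>
      obtain ⟨u, v, α, β, hc, h1, h2⟩ := hs
      rw [ih, h1, h2, wordProd_append, wordProd_append]
      simp only [wordProd_cons, ← mul_assoc]
      rw [mul_assoc (GraphGroupPaper.wordProd k F u), (sym_comm hc).eq, ← mul_assoc]

open Classical in
/-- Multiply a word on the left by a symbol, keeping it reduced. -/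
noncomputable def push (F : Set (Sym2 (Fin k))) (α : Fin k × Bool) :
    List (Fin k × Bool) → List (Fin k × Bool)
  | [] => [α]
  | β :: t => if β = sinv α then t else if CC F α β then β :: push F α t else α :: β :: t

@[simp] lemma push_nil (α : Fin k × Bool) : push F α [] = [α] := rfl

open Classical in
lemma push_cons (α β : Fin k × Bool) (t : List (Fin k × Bool)) :
    push F α (β :: t) =
      if β = sinv α then t else if CC F α β then β :: push F α t else α :: β :: t := by
  rw [push]

lemma push_cancel {α β : Fin k × Bool} (h : β = sinv α) (t : List (Fin k × Bool)) :
    push F α (β :: t) = t := by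
  rw [push_cons, if_pos h]

lemma push_comm {α β : Fin k × Bool} (h : CC F α β) (t : List (Fin k × Bool)) :
    push F α (β :: t) = β :: push F α t := by
  rw [push_cons, if_neg h.ne_sinv, if_pos h]

lemma push_block {α β : Fin k × Bool} (h1 : β ≠ sinv α) (h2 : ¬ CC F α β)
    (t : List (Fin k × Bool)) : push F α (β :: t) = α :: β :: t := by
  rw [push_cons, if_neg h1, if_neg h2]

/-- `sinv α` is "visible from the left" in `l` (so `push α` will cancel it). -/
def visDel (F : Set (Sym2 (Fin k))) (α : Fin k × Bool) : List (Fin k × Bool) → Prop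
  | [] => False
  | β :: t => β = sinv α ∨ (CC F α β ∧ visDel F α t)

@[simp] lemma visDel_nil (α : Fin k × Bool) : ¬ visDel F α [] := fun h => h

@[simp] lemma visDel_cons (α β : Fin k × Bool) (t : List (Fin k × Bool)) :
    visDel F α (β :: t) ↔ β = sinv α ∨ (CC F α β ∧ visDel F α t) := Iff.rfl

/-- Reduced word: no letter sees a cancelling partner to its right. -/
def RedR (F : Set (Sym2 (Fin k))) : List (Fin k × Bool) → Prop
  | [] => True
  | β :: t => ¬ visDel F β t ∧ RedR F t

@[simp] lemma RedR_nil : RedR F [] := trivial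

@[simp] lemma RedR_cons (β : Fin k × Bool) (t : List (Fin k × Bool)) :
    RedR F (β :: t) ↔ ¬ visDel F β t ∧ RedR F t := Iff.rfl

lemma wordProd_push (α : Fin k × Bool) (l : List (Fin k × Bool)) :
    wordProd k F (push F α l) = sym k F α * wordProd k F l := by
  induction l with
  | nil => simp
  | cons β t ih =>
      by_cases h1 : β = sinv α
      · rw [push_cancel h1, h1]; simp
      · by_cases h2 : CC F α β
        · rw [push_comm h2, wordProd_cons, ih, wordProd_cons, ← mul_assoc, ← mul_assoc,
            (sym_comm h2.symm).eq]
        · rw [push_block h1 h2]; simp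

lemma length_push_of_visDel {α : Fin k × Bool} {l : List (Fin k × Bool)}
    (h : visDel F α l) : (push F α l).length + 1 = l.length := by
  induction l with
  | nil => exact absurd h (visDel_nil α)
  | cons β t ih =>
      rcases h with h | ⟨hc, hv⟩
      · rw [push_cancel h]; rfl
      · rw [push_comm hc]; simpa using ih hv

lemma length_push_of_not_visDel {α : Fin k × Bool} {l : List (Fin k × Bool)}
    (h : ¬ visDel F α l) : (push F α l).length = l.length + 1 := by
  induction l with
  | nil => simp
  | cons β t ih =>
      have h1 : β ≠ sinv α := fun hh => h (Or.inl hh)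
      by_cases h2 : CC F α β
      · have hv : ¬ visDel F α t := fun hv => h (Or.inr ⟨h2, hv⟩)
        rw [push_comm h2]; simpa using ih hv
      · rw [push_block h1 h2]; rfl

lemma length_push_le (α : Fin k × Bool) (l : List (Fin k × Bool)) :
    (push F α l).length ≤ l.length + 1 := by
  by_cases h : visDel F α l
  · have := length_push_of_visDel h; omega
  · rw [length_push_of_not_visDel h]

lemma visDel_push_of_cc {α β : Fin k × Bool} {t : List (Fin k × Bool)} (hc : CC F α β)
    (h : visDel F β (push F α t)) : visDel F β t := by
  induction t with
  | nil =>
      rw [push_nil] at h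
      rcases h with h | ⟨_, h⟩
      · exact absurd h (sinv_ne_iff_fst hc.1.symm)
      · exact absurd h (visDel_nil β)
  | cons γ s ih =>
      by_cases h1 : γ = sinv α
      · rw [push_cancel h1] at h
        refine Or.inr ⟨?_, h⟩
        rw [h1]; exact (CC_sinv_right).2 hc.symm
      · by_cases h2 : CC F α γ
        · rw [push_comm h2] at h
          rcases h with h | ⟨hc2, h⟩
          · exact Or.inl h
          · exact Or.inr ⟨hc2, ih h⟩
        · rw [push_block h1 h2] at h
          rcases h with h | ⟨_, h⟩
          · exact absurd h (sinv_ne_iff_fst hc.1.symm)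
          · exact h

lemma RedR.push {l : List (Fin k × Bool)} (h : RedR F l) (α : Fin k × Bool) :
    RedR F (push F α l) := by
  induction l with
  | nil => simp
  | cons β t ih =>
      obtain ⟨h1, h2⟩ := (RedR_cons β t).1 h
      by_cases hc1 : β = sinv α
      · rw [push_cancel hc1]; exact h2
      · by_cases hc2 : CC F α β
        · rw [push_comm hc2]
          exact ⟨fun hv => h1 (visDel_push_of_cc hc2 hv), ih h2⟩
        · rw [push_block hc1 hc2]
          refine ⟨?_, h⟩
          rintro (hh | ⟨hcc, _⟩)
          · exact hc1 hh
          · exact hc2 hcc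

lemma push_ins {α : Fin k × Bool} {l : List (Fin k × Bool)} (h : ¬ visDel F α l) :
    Braid F (push F α l) (α :: l) := by
  induction l with
  | nil => simp; rfl
  | cons β t ih =>
      have h1 : β ≠ sinv α := fun hh => h (Or.inl hh)
      by_cases h2 : CC F α β
      · have hv : ¬ visDel F α t := fun hv => h (Or.inr ⟨h2, hv⟩)
        rw [push_comm h2]
        exact (Braid.cons β (ih hv)).trans (Braid.swap₀ h2.symm)
      · rw [push_block h1 h2]

lemma push_push_sinv {α : Fin k × Bool} {l : List (Fin k × Bool)} (h : RedR F l) :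
    Braid F (push F (sinv α) (push F α l)) l := by
  induction l with
  | nil => rw [push_nil, push_cancel (sinv_sinv α).symm]
  | cons β t ih =>
      obtain ⟨h1, h2⟩ := (RedR_cons β t).1 h
      by_cases hc1 : β = sinv α
      · rw [push_cancel hc1]
        subst hc1
        exact push_ins h1
      · by_cases hc2 : CC F α β
        · rw [push_comm hc2, push_comm ((CC_sinv_left).2 hc2)]
          exact Braid.cons β (ih h2)
        · rw [push_block hc1 hc2, push_cancel (sinv_sinv α).symm]

lemma push_push_sinv' {α : Fin k × Bool} {l : List (Fin k × Bool)} (h : RedR F l) :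
    Braid F (push F α (push F (sinv α) l)) l := by
  have := push_push_sinv (α := sinv α) h
  rwa [sinv_sinv] at this

lemma push_swap_core {α β γ : Fin k × Bool} (hc : CC F β γ)
    (u v : List (Fin k × Bool)) :
    Braid F (push F α (u ++ β :: γ :: v)) (push F α (u ++ γ :: β :: v)) := by
  induction u with
  | cons δ u ih =>
      by_cases h1 : δ = sinv α
      · rw [List.cons_append, List.cons_append, push_cancel h1, push_cancel h1]
        exact Braid.single hc
      · by_cases h2 : CC F α δ
        · rw [List.cons_append, List.cons_append, push_comm h2, push_comm h2]
          exact Braid.cons δ ih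
        · rw [List.cons_append, List.cons_append, push_block h1 h2, push_block h1 h2]
          exact Braid.cons α (Braid.cons δ (Braid.single hc))
  | nil =>
      simp only [List.nil_append]
      by_cases h1 : β = sinv α
      · subst h1
        have hγ : CC F α γ := (CC_sinv_left).1 hc
        rw [push_cancel rfl, push_comm hγ, push_cancel rfl]
      · by_cases h2 : γ = sinv α
        · subst h2
          have hβ : CC F α β := ((CC_sinv_right).1 hc).symm
          rw [push_comm hβ, push_cancel rfl, push_cancel rfl]
        · by_cases h3 : CC F α β <;> by_cases h4 : CC F α γ
          · rw [push_comm h3, push_comm h4, push_comm h4, push_comm h3]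
            exact Braid.swap₀ hc
          · rw [push_comm h3, push_block h2 h4, push_block h2 h4]
            exact (Braid.swap₀ h3.symm).trans (Braid.cons α (Braid.swap₀ hc))
          · rw [push_block h1 h3, push_comm h4, push_block h1 h3]
            exact (Braid.cons α (Braid.swap₀ hc)).trans (Braid.swap₀ h4)
          · rw [push_block h1 h3, push_block h2 h4]
            exact Braid.cons α (Braid.swap₀ hc)

lemma push_braid {l l' : List (Fin k × Bool)} (α : Fin k × Bool) (h : Braid F l l') :
    Braid F (push F α l) (push F α l') := by
  induction h with
  | refl => rfl
  | tail _ hs ih =>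
      obtain ⟨u, v, β, γ, hc, h1, h2⟩ := hs
      subst h1; subst h2
      exact ih.trans (push_swap_core hc u v)

lemma push_push_comm {α β : Fin k × Bool} (hc : CC F α β) (l : List (Fin k × Bool)) :
    Braid F (push F α (push F β l)) (push F β (push F α l)) := by
  have hab : α ≠ sinv β := sinv_ne_iff_fst hc.1.symm
  have hba : β ≠ sinv α := sinv_ne_iff_fst hc.1
  induction l with
  | nil =>
      rw [push_nil, push_nil, push_comm hc.symm, push_comm hc, push_nil, push_nil]
      exact Braid.swap₀ hc.symm
  | cons γ t ih =>
      by_cases h1 : γ = sinv β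
      · have hγα : γ ≠ sinv α := by
          subst h1; exact fun hh => hc.1 (congrArg Prod.fst hh).symm
        have hαγ : CC F α γ := by subst h1; exact (CC_sinv_right).2 hc
        rw [push_cancel h1, push_comm hαγ, push_cancel h1]
      · by_cases h2 : γ = sinv α
        · have hβγ : CC F β γ := by subst h2; exact (CC_sinv_right).2 hc.symm
          rw [push_cancel h2, push_comm hβγ, push_cancel h2]
        · by_cases h3 : CC F β γ <;> by_cases h4 : CC F α γ
          · rw [push_comm h3, push_comm h4, push_comm h4, push_comm h3]
            exact Braid.cons γ ih
          · rw [push_comm h3, push_block h2 h4, push_block h2 h4, push_comm hc.symm,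
              push_comm h3]
          · rw [push_block h1 h3, push_comm h4, push_comm hc, push_comm h4,
              push_block h1 h3]
          · rw [push_block h1 h3, push_comm hc, push_block h2 h4, push_comm hc.symm,
              push_block h1 h3]
            exact Braid.swap₀ hc.symm

/-- Reduce a word by pushing its letters one by one onto the empty word. -/
noncomputable def reduce (F : Set (Sym2 (Fin k))) (l : List (Fin k × Bool)) :
    List (Fin k × Bool) :=
  l.foldr (push F) []

@[simp] lemma reduce_nil : reduce F [] = [] := rfl

@[simp] lemma reduce_cons (α : Fin k × Bool) (l : List (Fin k × Bool)) :
    reduce F (α :: l) = push F α (reduce F l) := rfl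

lemma reduce_red (l : List (Fin k × Bool)) : RedR F (reduce F l) := by
  induction l with
  | nil => simp
  | cons α t ih => exact ih.push α

lemma reduce_wordProd (l : List (Fin k × Bool)) :
    wordProd k F (reduce F l) = wordProd k F l := by
  induction l with
  | nil => rfl
  | cons α t ih => rw [reduce_cons, wordProd_push, ih, wordProd_cons]

lemma reduce_length_le (l : List (Fin k × Bool)) : (reduce F l).length ≤ l.length := by
  induction l with
  | nil => simp
  | cons α t ih =>
      calc (reduce F (α :: t)).length ≤ (reduce F t).length + 1 := length_push_le α _
      _ ≤ t.length + 1 := by omega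
      _ = (α :: t).length := rfl

lemma reduce_self_braid {l : List (Fin k × Bool)} (h : RedR F l) :
    Braid F (reduce F l) l := by
  induction l with
  | nil => rfl
  | cons α t ih =>
      obtain ⟨h1, h2⟩ := (RedR_cons α t).1 h
      exact ((push_braid α (ih h2)).trans (push_ins h1))

instance braidSetoid (F : Set (Sym2 (Fin k))) : Setoid {l : List (Fin k × Bool) // RedR F l} :=
  ⟨fun a b => Braid F a.1 b.1,
   ⟨fun _ => Braid.refl _, fun h => h.symm, fun h1 h2 => h1.trans h2⟩⟩

/-- Normal forms: reduced words up to braid equivalence. -/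
def NFQ (F : Set (Sym2 (Fin k))) := Quotient (braidSetoid F)

noncomputable def pushNF (F : Set (Sym2 (Fin k))) (α : Fin k × Bool) : NFQ F → NFQ F :=
  Quotient.map (fun r => ⟨push F α r.1, r.2.push α⟩) (fun _ _ h => push_braid α h)

noncomputable def pushPerm (F : Set (Sym2 (Fin k))) (α : Fin k × Bool) :
    Equiv.Perm (NFQ F) where
  toFun := pushNF F α
  invFun := pushNF F (sinv α)
  left_inv := by
    intro q
    induction q using Quotient.inductionOn with
    | h r => exact Quotient.sound (push_push_sinv r.2)
  right_inv := by
    intro q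
    induction q using Quotient.inductionOn with
    | h r => exact Quotient.sound (push_push_sinv' r.2)

lemma pushPerm_comm {α β : Fin k × Bool} (hc : CC F α β) :
    pushPerm F α * pushPerm F β = pushPerm F β * pushPerm F α := by
  ext q
  rw [Equiv.Perm.mul_apply, Equiv.Perm.mul_apply]
  induction q using Quotient.inductionOn with
  | h r =>
      exact Quotient.sound (push_push_comm hc r.1)

lemma rels_act (r : FreeGroup (Fin k)) (hr : r ∈ Rels k F) :
    FreeGroup.lift (fun i => pushPerm F (i, true)) r = 1 := by
  obtain ⟨i, j, hij, hF, rfl⟩ := hr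
  simp only [map_mul, map_inv, FreeGroup.lift_apply_of]
  have hc : CC F (i, true) (j, true) := ⟨hij, hF⟩
  rw [pushPerm_comm hc]
  group

/-- The action of the graph group on normal forms. -/
noncomputable def act : Grp k F →* Equiv.Perm (NFQ F) :=
  PresentedGroup.toGroup rels_act

lemma act_gen (i : Fin k) : act (gen k F i) = pushPerm F (i, true) :=
  PresentedGroup.toGroup.of rels_act

lemma act_sym_apply (α : Fin k × Bool) (q : NFQ F) :
    act (sym k F α) q = pushNF F α q := by
  obtain ⟨i, b⟩ := α
  cases b
  · have h1 : sym k F (i, false) = (gen k F i)⁻¹ := rfl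
    rw [h1, map_inv, act_gen]
    show ((pushPerm F (i, true))⁻¹ : Equiv.Perm (NFQ F)) q = _
    rfl
  · have h1 : sym k F (i, true) = gen k F i := rfl
    rw [h1, act_gen]; rfl

/-- The normal form of a group element. -/
noncomputable def nf (x : Grp k F) : NFQ F :=
  act x (Quotient.mk (braidSetoid F) ⟨[], RedR_nil⟩)

lemma nf_wordProd (l : List (Fin k × Bool)) :
    nf (wordProd k F l) = Quotient.mk (braidSetoid F) ⟨reduce F l, reduce_red l⟩ := by
  induction l with
  | nil => show act 1 _ = _; rw [map_one]; rfl
  | cons α t ih =>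
      show act (sym k F α * wordProd k F t) _ = _
      rw [map_mul]
      show act (sym k F α) (nf (wordProd k F t)) = _
      rw [act_sym_apply, ih]
      rfl

/-- Uniqueness of reduced words up to braid moves. -/
theorem braid_of_red_eq {l l' : List (Fin k × Bool)} (hl : RedR F l) (hl' : RedR F l')
    (h : wordProd k F l = wordProd k F l') : Braid F l l' := by
  have h1 := nf_wordProd (F := F) l
  have h2 := nf_wordProd (F := F) l'
  rw [h] at h1
  have h3 : Braid F (reduce F l) (reduce F l') := Quotient.exact (h1.symm.trans h2)
  exact ((reduce_self_braid hl).symm.trans h3).trans (reduce_self_braid hl')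

/-- The formal inverse of a word. -/
def invWord (l : List (Fin k × Bool)) : List (Fin k × Bool) := (l.map sinv).reverse

@[simp] lemma invWord_length (l : List (Fin k × Bool)) : (invWord l).length = l.length := by
  simp [invWord]

lemma wordProd_invWord (l : List (Fin k × Bool)) :
    wordProd k F (invWord l) = (wordProd k F l)⁻¹ := by
  induction l with
  | nil => simp [invWord]
  | cons α t ih =>
      have : invWord (α :: t) = invWord t ++ [sinv α] := by simp [invWord]
      rw [this, wordProd_append, ih, wordProd_cons]
      simp [mul_comm]

lemma wordProd_surjective : ∀ x : Grp k F, ∃ l, wordProd k F l = x := by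
  intro x
  induction x using PresentedGroup.induction_on with
  | H z =>
    induction z using FreeGroup.induction_on with
    | C1 => exact ⟨[], by rw [map_one]; rfl⟩
    | of i => exact ⟨[(i, true)], by simp [sym, gen]; rfl⟩
    | inv_of i _ =>
        refine ⟨[(i, false)], ?_⟩
        rw [map_inv]
        show sym k F (i, false) * 1 = _
        rw [mul_one]
        rfl
    | mul x y hx hy =>
        obtain ⟨lx, hlx⟩ := hx
        obtain ⟨ly, hly⟩ := hy
        exact ⟨lx ++ ly, by rw [wordProd_append, hlx, hly, map_mul]⟩

lemma len_le_length (l : List (Fin k × Bool)) : len (wordProd k F l) ≤ l.length :=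
  Nat.sInf_le ⟨l, rfl, rfl⟩

lemma len_eq_of_red {l : List (Fin k × Bool)} (h : RedR F l) :
    len (wordProd k F l) = l.length := by
  have hne : {n | ∃ w, wordProd k F w = wordProd k F l ∧ w.length = n}.Nonempty :=
    ⟨l.length, l, rfl, rfl⟩
  obtain ⟨w, hw, hwlen⟩ := Nat.sInf_mem hne
  have hbr : Braid F (reduce F w) l :=
    braid_of_red_eq (reduce_red w) h (by rw [reduce_wordProd]; exact hw)
  have h1 : (reduce F w).length = l.length := hbr.length
  have h2 : (reduce F w).length ≤ w.length := reduce_length_le w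
  have h3 : len (wordProd k F l) ≤ l.length := len_le_length l
  have h4 : len (wordProd k F l) = w.length := hwlen.symm
  omega

lemma len_eq_reduce (l : List (Fin k × Bool)) :
    len (wordProd k F l) = (reduce F l).length := by
  rw [← reduce_wordProd]
  exact len_eq_of_red (reduce_red l)

lemma exists_red_word (x : Grp k F) :
    ∃ l, RedR F l ∧ wordProd k F l = x ∧ l.length = len x := by
  obtain ⟨l, hl⟩ := wordProd_surjective x
  refine ⟨reduce F l, reduce_red l, by rw [reduce_wordProd]; exact hl, ?_⟩
  rw [← hl, len_eq_reduce]

@[simp] lemma len_one : len (1 : Grp k F) = 0 := by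
  have := len_eq_of_red (F := F) RedR_nil
  simpa using this

lemma len_mul_le (x y : Grp k F) : len (x * y) ≤ len x + len y := by
  obtain ⟨lx, _, hx, hlx⟩ := exists_red_word x
  obtain ⟨ly, _, hy, hly⟩ := exists_red_word y
  have : wordProd k F (lx ++ ly) = x * y := by rw [wordProd_append, hx, hy]
  calc len (x * y) ≤ (lx ++ ly).length := this ▸ len_le_length _
  _ = len x + len y := by simp [hlx, hly]

lemma len_inv_le (x : Grp k F) : len x⁻¹ ≤ len x := by
  obtain ⟨l, _, hx, hlx⟩ := exists_red_word x
  have : wordProd k F (invWord l) = x⁻¹ := by rw [wordProd_invWord, hx]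
  calc len x⁻¹ ≤ (invWord l).length := this ▸ len_le_length _
  _ = len x := by simp [hlx]

@[simp] lemma len_inv (x : Grp k F) : len x⁻¹ = len x := by
  refine le_antisymm (len_inv_le x) ?_
  have := len_inv_le x⁻¹
  simpa using this

lemma visDel_iff_len {l : List (Fin k × Bool)} (h : RedR F l) (α : Fin k × Bool) :
    visDel F α l ↔ len (sym k F α * wordProd k F l) + 1 = len (wordProd k F l) := by
  have hp : len (sym k F α * wordProd k F l) = (push F α l).length := by
    rw [← wordProd_push]; exact len_eq_of_red (h.push α)
  have hl : len (wordProd k F l) = l.length := len_eq_of_red h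
  constructor
  · intro hv
    have := length_push_of_visDel hv
    omega
  · intro he
    by_contra hv
    have := length_push_of_not_visDel hv
    omega

lemma redR_of_len {l : List (Fin k × Bool)}
    (h : l.length = len (wordProd k F l)) : RedR F l := by
  induction l with
  | nil => simp
  | cons γ t ih =>
      have hr : t.length + 1 = (push F γ (reduce F t)).length := by
        have h0 := len_eq_reduce (F := F) (γ :: t)
        rw [← h] at h0
        simpa using h0
      have h2 : (reduce F t).length ≤ t.length := reduce_length_le t
      have h3 : (push F γ (reduce F t)).length ≤ (reduce F t).length + 1 :=
        length_push_le γ _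
      have h4 : (reduce F t).length = t.length := by omega
      have h5 : ¬ visDel F γ (reduce F t) := by
        intro hv
        have := length_push_of_visDel hv
        omega
      have hredt : RedR F t := by
        apply ih
        rw [len_eq_reduce, h4]
      refine ⟨?_, hredt⟩
      intro hv
      apply h5
      rw [visDel_iff_len (reduce_red t), reduce_wordProd]
      exact (visDel_iff_len hredt γ).1 hv

lemma RedR.invWord {l : List (Fin k × Bool)} (h : RedR F l) : RedR F (invWord l) := by
  apply redR_of_len
  rw [wordProd_invWord, len_inv, invWord_length]
  exact (len_eq_of_red h).symm

/-- `α` is a first letter of (a reduced word of) `x`. -/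
def FL (α : Fin k × Bool) (x : Grp k F) : Prop :=
  len ((sym k F α)⁻¹ * x) + 1 = len x

lemma visDel_append (α : Fin k × Bool) (a b : List (Fin k × Bool)) :
    visDel F α (a ++ b) ↔ visDel F α a ∨ ((∀ β ∈ a, CC F α β) ∧ visDel F α b) := by
  induction a with
  | nil => simp
  | cons γ a ih =>
      simp only [List.cons_append, visDel_cons, ih, List.forall_mem_cons]
      tauto

lemma visDel_of_prefix {α : Fin k × Bool} {p : List (Fin k × Bool)}
    (h : ∀ β ∈ p, CC F α β) (r : List (Fin k × Bool)) :
    visDel F α (p ++ sinv α :: r) := by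
  rw [visDel_append]
  exact Or.inr ⟨h, Or.inl rfl⟩

lemma RedR.append {a b : List (Fin k × Bool)} (ha : RedR F a) (hb : RedR F b)
    (hspan : ∀ γ p q, a = p ++ γ :: q → (∀ β ∈ q, CC F γ β) → ¬ visDel F γ b) :
    RedR F (a ++ b) := by
  induction a with
  | nil => simpa using hb
  | cons γ a ih =>
      obtain ⟨h1, h2⟩ := (RedR_cons γ a).1 ha
      refine ⟨?_, ih h2 (fun γ' p q hp hq => hspan γ' (γ :: p) q (by rw [hp]; rfl) hq)⟩
      show ¬ visDel F γ (a ++ b)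
      rw [visDel_append]
      rintro (hv | ⟨hall, hvb⟩)
      · exact h1 hv
      · exact hspan γ [] a rfl hall hvb

lemma invWord_append (x y : List (Fin k × Bool)) :
    invWord (x ++ y) = invWord y ++ invWord x := by simp [invWord]

@[simp] lemma invWord_invWord (l : List (Fin k × Bool)) : invWord (invWord l) = l := by
  have h : (sinv ∘ sinv : Fin k × Bool → Fin k × Bool) = id := funext sinv_sinv
  rw [invWord, invWord, List.map_reverse, List.reverse_reverse, List.map_map, h, List.map_id]

lemma FL_iff_visDel {x : Grp k F} {l : List (Fin k × Bool)} (hl : RedR F l)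
    (hx : wordProd k F l = x) (α : Fin k × Bool) :
    FL α x ↔ visDel F (sinv α) l := by
  rw [show FL α x ↔ len ((sym k F α)⁻¹ * x) + 1 = len x from Iff.rfl,
    visDel_iff_len hl (sinv α), sym_sinv, hx]

lemma len_inv_mul_of_disjoint {x y : Grp k F} (h : ∀ α, ¬(FL α x ∧ FL α y)) :
    len (x⁻¹ * y) = len x + len y := by
  obtain ⟨u, hu, hxu, hlu⟩ := exists_red_word x
  obtain ⟨v, hv, hyv, hlv⟩ := exists_red_word y
  have hw : wordProd k F (invWord u ++ v) = x⁻¹ * y := by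
    rw [wordProd_append, wordProd_invWord, hxu, hyv]
  have hred : RedR F (invWord u ++ v) := by
    refine RedR.append hu.invWord hv ?_
    intro γ p q hsplit hq hvb
    have husplit : u = invWord q ++ sinv γ :: invWord p := by
      have := congrArg invWord hsplit
      rw [invWord_invWord] at this
      rw [this, invWord_append]
      simp [invWord]
    have hvdu : visDel F γ u := by
      rw [husplit]
      refine visDel_of_prefix ?_ _
      intro β hβ
      simp only [invWord, List.mem_reverse, List.mem_map] at hβ
      obtain ⟨β', hβ', rfl⟩ := hβ
      exact (CC_sinv_right).2 (hq β' hβ')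
    have hfx : FL (sinv γ) x := by
      rw [FL_iff_visDel hu hxu, sinv_sinv]
      exact hvdu
    have hfy : FL (sinv γ) y := by
      rw [FL_iff_visDel hv hyv, sinv_sinv]
      exact hvb
    exact h (sinv γ) ⟨hfx, hfy⟩
  rw [← hw, len_eq_of_red hred]
  simp [hlu, hlv]

lemma len_sym_le (α : Fin k × Bool) : len (sym k F α) ≤ 1 := by
  have h : wordProd k F [α] = sym k F α := by simp
  simpa using h ▸ len_le_length (F := F) [α]

lemma len_triangle (m x : Grp k F) : len x ≤ len m + len (m⁻¹ * x) := by
  have h : m * (m⁻¹ * x) = x := by group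
  calc len x = len (m * (m⁻¹ * x)) := by rw [h]
  _ ≤ len m + len (m⁻¹ * x) := len_mul_le _ _

/-- The median property, based at 1. -/
theorem exists_median_zero (x y : Grp k F) : ∃ m : Grp k F,
    len m + len (m⁻¹ * x) = len x ∧ len m + len (m⁻¹ * y) = len y ∧
    len (x⁻¹ * m) + len (m⁻¹ * y) = len (x⁻¹ * y) := by
  suffices H : ∀ n (x y : Grp k F), len x + len y = n → ∃ m : Grp k F,
      len m + len (m⁻¹ * x) = len x ∧ len m + len (m⁻¹ * y) = len y ∧
      len (x⁻¹ * m) + len (m⁻¹ * y) = len (x⁻¹ * y) by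
    exact H _ x y rfl
  intro n
  induction n using Nat.strong_induction_on with
  | _ n ih =>
      intro x y hn
      by_cases hex : ∃ α, FL α x ∧ FL α y
      · obtain ⟨α, hfx, hfy⟩ := hex
        have hx' : len ((sym k F α)⁻¹ * x) + 1 = len x := hfx
        have hy' : len ((sym k F α)⁻¹ * y) + 1 = len y := hfy
        obtain ⟨m', B1, B2, B3⟩ := ih (len ((sym k F α)⁻¹ * x) + len ((sym k F α)⁻¹ * y))
          (by omega) _ _ rfl
        refine ⟨sym k F α * m', ?_, ?_, ?_⟩
        · have e1 : (sym k F α * m')⁻¹ * x = m'⁻¹ * ((sym k F α)⁻¹ * x) := by group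
          have e2 : len (sym k F α * m') ≤ 1 + len m' :=
            le_trans (len_mul_le _ _) (by have := len_sym_le (F := F) α; omega)
          have e3 := len_triangle (sym k F α * m') x
          rw [e1] at e3 ⊢
          omega
        · have e1 : (sym k F α * m')⁻¹ * y = m'⁻¹ * ((sym k F α)⁻¹ * y) := by group
          have e2 : len (sym k F α * m') ≤ 1 + len m' :=
            le_trans (len_mul_le _ _) (by have := len_sym_le (F := F) α; omega)
          have e3 := len_triangle (sym k F α * m') y
          rw [e1] at e3 ⊢
          omega
        · have e1 : x⁻¹ * (sym k F α * m') = ((sym k F α)⁻¹ * x)⁻¹ * m' := by group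
          have e2 : (sym k F α * m')⁻¹ * y = m'⁻¹ * ((sym k F α)⁻¹ * y) := by group
          have e3 : x⁻¹ * y = ((sym k F α)⁻¹ * x)⁻¹ * ((sym k F α)⁻¹ * y) := by group
          rw [e1, e2, e3]
          exact B3
      · push_neg at hex
        refine ⟨1, by simp, by simp, ?_⟩
        have := len_inv_mul_of_disjoint (fun α h => hex α h.1 h.2)
        simpa using this.symm

end Helly

/-- Helly property: pairwise intersecting convex sets have a
common element. -/
theorem stmt7 {k : ℕ} (hk : 1 ≤ k) {F : Set (Sym2 (Fin k))}
    (L₁ L₂ L₃ : Set (Grp k F))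
    (h1 : ConvexSet L₁) (h2 : ConvexSet L₂) (h3 : ConvexSet L₃)
    (h12 : (L₁ ∩ L₂).Nonempty) (h13 : (L₁ ∩ L₃).Nonempty)
    (h23 : (L₂ ∩ L₃).Nonempty) :
    (L₁ ∩ L₂ ∩ L₃).Nonempty := by
  obtain ⟨c12, hc12⟩ := h12
  obtain ⟨c13, hc13⟩ := h13
  obtain ⟨c23, hc23⟩ := h23
  obtain ⟨m0, B1, B2, B3⟩ := exists_median_zero (c23⁻¹ * c13) (c23⁻¹ * c12)
  have e1 : (c23 * m0)⁻¹ * c13 = m0⁻¹ * (c23⁻¹ * c13) := by group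
  have e2 : (c23 * m0)⁻¹ * c12 = m0⁻¹ * (c23⁻¹ * c12) := by group
  have e3 : c13⁻¹ * (c23 * m0) = (c23⁻¹ * c13)⁻¹ * m0 := by group
  have e4 : c13⁻¹ * c12 = (c23⁻¹ * c13)⁻¹ * (c23⁻¹ * c12) := by group
  have e5 : c23⁻¹ * (c23 * m0) = m0 := by group
  refine ⟨c23 * m0, ⟨h1.2 c13 c12 _ hc13.1 hc12.1 ?_, h2.2 c23 c12 _ hc23.1 hc12.2 ?_⟩,
    h3.2 c23 c13 _ hc23.2 hc13.2 ?_⟩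
  · show len (c13⁻¹ * (c23 * m0)) + len ((c23 * m0)⁻¹ * c12) = len (c13⁻¹ * c12)
    rw [e3, e2, e4]; exact B3
  · show len (c23⁻¹ * (c23 * m0)) + len ((c23 * m0)⁻¹ * c12) = len (c23⁻¹ * c12)
    rw [e5, e2]; exact B2
  · show len (c23⁻¹ * (c23 * m0)) + len ((c23 * m0)⁻¹ * c13) = len (c23⁻¹ * c13)
    rw [e5, e1]; exact B1

end GraphGroupPaper
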